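/- Let F : ℝⁿ → ℝⁿ be δ-monotone for some δ ∈ (0,1], and let γ : [0,1] → ℝⁿ be the affine parametrization of a line segment from a to b. Then the image curve F ∘ γ is rectifiable with length at most δ⁻¹|F(a) − F(b)|. -/

import Mathlib

theorem stmt10 (n : ℕ) (F : EuclideanSpace ℝ (Fin n) → EuclideanSpace ℝ (Fin n))
    (δ : ℝ) (hδ0 : 0 < δ) (hδ1 : δ ≤ 1)
    (hF : ∀ x y, δ * ‖F x - F y‖ * ‖x - y‖ ≤ (inner ℝ (F x - F y) (x - y) : ℝ))
    (a b : EuclideanSpace ℝ (Fin n)) :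
    eVariationOn (fun t : ℝ => F (a + t • (b - a))) (Set.Icc 0 1) ≤
      ENNReal.ofReal (δ⁻¹ * ‖F a - F b‖) := by
  set g : ℝ → EuclideanSpace ℝ (Fin n) := fun t => F (a + t • (b - a)) with hg
  have key : ∀ s t : ℝ, s ≤ t →
      δ * ‖g t - g s‖ * ‖b - a‖ ≤ (inner ℝ (g t - g s) (b - a) : ℝ) := by
    intro s t hst
    rcases eq_or_lt_of_le hst with rfl | hlt
    · simp
    · have h := hF (a + t • (b - a)) (a + s • (b - a))
      have hxy : (a + t • (b - a)) - (a + s • (b - a)) = (t - s) • (b - a) := by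
        module
      rw [hxy, norm_smul, Real.norm_eq_abs, abs_of_pos (by linarith),
        real_inner_smul_right] at h
      have ht : 0 < t - s := by linarith
      have h2 : (t - s) * (δ * ‖g t - g s‖ * ‖b - a‖)
          ≤ (t - s) * (inner ℝ (g t - g s) (b - a) : ℝ) := by
        nlinarith [h]
      exact le_of_mul_le_mul_left h2 ht
  refine iSup_le ?_
  rintro ⟨m, u, hu, hus⟩
  have hsum : ∑ i ∈ Finset.range m, edist (g (u (i + 1))) (g (u i))
      = ENNReal.ofReal (∑ i ∈ Finset.range m, ‖g (u (i + 1)) - g (u i)‖) := by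
    rw [ENNReal.ofReal_sum_of_nonneg (fun i _ => norm_nonneg _)]
    refine Finset.sum_congr rfl fun i _ => ?_
    rw [edist_dist, dist_eq_norm]
  simp only [hsum]
  apply ENNReal.ofReal_le_ofReal
  set S : ℝ := ∑ i ∈ Finset.range m, ‖g (u (i + 1)) - g (u i)‖ with hS
  by_cases hab : b - a = 0
  · have hconst : ∀ t : ℝ, g t = F a := fun t => by simp [hg, hab]
    have : S = 0 := by simp [hS, hconst]
    rw [this]
    positivity
  · have hB : 0 < ‖b - a‖ := norm_pos_iff.mpr hab
    have h1 : ∑ i ∈ Finset.range m, δ * ‖g (u (i + 1)) - g (u i)‖ * ‖b - a‖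
        ≤ ∑ i ∈ Finset.range m, (inner ℝ (g (u (i + 1)) - g (u i)) (b - a) : ℝ) :=
      Finset.sum_le_sum fun i _ => key _ _ (hu (Nat.le_succ i))
    have h2 : ∑ i ∈ Finset.range m, (inner ℝ (g (u (i + 1)) - g (u i)) (b - a) : ℝ)
        = (inner ℝ (g (u m) - g (u 0)) (b - a) : ℝ) := by
      have := Finset.sum_range_sub (fun i => (inner ℝ (g (u i)) (b - a) : ℝ)) m
      simpa [inner_sub_left] using this
    have e0 : g 0 = F a := by simp [hg]
    have e1 : g 1 = F b := by simp [hg]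
    have k1 : 0 ≤ (inner ℝ (g 1 - g (u m)) (b - a) : ℝ) :=
      le_trans (by positivity) (key _ _ (hus m).2)
    have k0 : 0 ≤ (inner ℝ (g (u 0) - g 0) (b - a) : ℝ) :=
      le_trans (by positivity) (key _ _ (hus 0).1)
    have h3 : (inner ℝ (g (u m) - g (u 0)) (b - a) : ℝ)
        = (inner ℝ (g 1 - g 0) (b - a) : ℝ) - inner ℝ (g 1 - g (u m)) (b - a)
          - inner ℝ (g (u 0) - g 0) (b - a) := by
      simp only [inner_sub_left]; ring
    have h4 : (inner ℝ (g 1 - g 0) (b - a) : ℝ) ≤ ‖F a - F b‖ * ‖b - a‖ := by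
      rw [e0, e1]
      calc (inner ℝ (F b - F a) (b - a) : ℝ) ≤ ‖F b - F a‖ * ‖b - a‖ :=
            real_inner_le_norm _ _
        _ = ‖F a - F b‖ * ‖b - a‖ := by rw [norm_sub_rev]
    have hsplit : δ * S * ‖b - a‖
        = ∑ i ∈ Finset.range m, δ * ‖g (u (i + 1)) - g (u i)‖ * ‖b - a‖ := by
      rw [hS, Finset.mul_sum, Finset.sum_mul]
    have hfin : δ * S * ‖b - a‖ ≤ ‖F a - F b‖ * ‖b - a‖ := by
      rw [hsplit]
      linarith [h1, h2, h3, h4, k0, k1]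
    have hδS : δ * S ≤ ‖F a - F b‖ := le_of_mul_le_mul_right (by linarith) hB
    calc S = δ⁻¹ * (δ * S) := by field_simp
      _ ≤ δ⁻¹ * ‖F a - F b‖ := mul_le_mul_of_nonneg_left hδS (by positivity)
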